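/- The optimal pebbling number of the n-vertex path and of the n-vertex cycle both equal ⌈2n/3⌉: π_OPT(P_n) = π_OPT(C_n) = ⌈2n/3⌉. -/

import Mathlib

open SimpleGraph

variable {V : Type*}

/-- Apply a pebbling move along the ordered pair `e`. -/
def applyMove [DecidableEq V] (D : V → ℕ) (e : V × V) : V → ℕ :=
  fun w => if w = e.1 then D w - 2 else if w = e.2 then D w + 1 else D w

/-- A list of ordered pairs is a valid pebbling sequence from `D`. -/
def ValidSeq [DecidableEq V] (G : SimpleGraph V) : (V → ℕ) → List (V × V) → Prop
  | _, [] => True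
  | D, e :: l => G.Adj e.1 e.2 ∧ 2 ≤ D e.1 ∧ ValidSeq G (applyMove D e) l

def applySeq [DecidableEq V] (D : V → ℕ) : List (V × V) → (V → ℕ)
  | [] => D
  | e :: l => applySeq (applyMove D e) l

/-- `r` is `m`-reachable under `D`. -/
def Reaches [DecidableEq V] (G : SimpleGraph V) (D : V → ℕ) (r : V) (m : ℕ) : Prop :=
  ∃ l : List (V × V), ValidSeq G D l ∧ m ≤ applySeq D l r

def Solvable [DecidableEq V] (G : SimpleGraph V) (D : V → ℕ) : Prop :=
  ∀ r : V, Reaches G D r 1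

noncomputable def pebNumTo [Fintype V] [DecidableEq V] (G : SimpleGraph V) (r : V) : ℕ :=
  sInf {k : ℕ | ∀ D : V → ℕ, (∑ v, D v) = k → Reaches G D r 1}

noncomputable def pebNum [Fintype V] [DecidableEq V] (G : SimpleGraph V) : ℕ :=
  sInf {k : ℕ | ∀ D : V → ℕ, (∑ v, D v) = k → Solvable G D}

noncomputable def optPebNum [Fintype V] [DecidableEq V] (G : SimpleGraph V) : ℕ :=
  sInf {k : ℕ | ∃ D : V → ℕ, (∑ v, D v) = k ∧ Solvable G D}

/-! ### Auxiliary development -/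


/-- Greedy pebble-delivery scan from the left: `Lfun D r` is the number of pebbles
deliverable to position `r` from positions `< r`. -/
def Lfun (D : ℕ → ℕ) : ℕ → ℕ
  | 0 => 0
  | r+1 => (Lfun D r + D r) / 2

/-- Fueled right scan. -/
def RAux (D : ℕ → ℕ) : ℕ → ℕ → ℕ
  | 0, _ => 0
  | f+1, r => (D (r+1) + RAux D f (r+1)) / 2

/-- Pebbles deliverable to `r` from positions in `(r, M)`. -/
def Rfun (D : ℕ → ℕ) (M r : ℕ) : ℕ := RAux D (M - 1 - r) r

lemma Lfun_succ (D : ℕ → ℕ) (r : ℕ) : Lfun D (r+1) = (Lfun D r + D r) / 2 := rfl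

lemma Rfun_succ (D : ℕ → ℕ) {M r : ℕ} (h : r + 1 < M) :
    Rfun D M r = (D (r+1) + Rfun D M (r+1)) / 2 := by
  unfold Rfun
  have : M - 1 - r = (M - 1 - (r+1)) + 1 := by omega
  rw [this]
  rfl

lemma Rfun_stop (D : ℕ → ℕ) {M r : ℕ} (h : M ≤ r + 1) : Rfun D M r = 0 := by
  unfold Rfun
  have : M - 1 - r = 0 := by omega
  rw [this]; rfl

/-- Master propagation lemma for the left scan. -/
lemma Lfun_master {D D' : ℕ → ℕ} {c a r : ℕ} (har : a ≤ r)
    (hbase : Lfun D a ≤ Lfun D' a + c)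
    (h : ∀ i, a ≤ i → i < r → D i ≤ D' i) :
    Lfun D r ≤ Lfun D' r + c := by
  induction r, har using Nat.le_induction with
  | base => exact hbase
  | succ m hm ih =>
    have h1 := ih (fun i h1 h2 => h i h1 (by omega))
    have hd := h m hm (by omega)
    show (Lfun D m + D m)/2 ≤ (Lfun D' m + D' m)/2 + c
    omega

/-- Master propagation lemma for the right scan (downward). -/
lemma Rfun_master {D D' : ℕ → ℕ} {M c b r : ℕ} (hrb : r ≤ b)
    (hbase : Rfun D M b ≤ Rfun D' M b + c)
    (h : ∀ i, r < i → i ≤ b → i < M → D i ≤ D' i) :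
    Rfun D M r ≤ Rfun D' M r + c := by
  obtain ⟨d, rfl⟩ : ∃ d, b = r + d := ⟨b - r, by omega⟩
  clear hrb
  induction d generalizing r with
  | zero => simpa using hbase
  | succ d ih =>
    by_cases hM : r + 1 < M
    · rw [Rfun_succ D hM, Rfun_succ D' hM]
      have h1 : Rfun D M (r+1) ≤ Rfun D' M (r+1) + c := by
        refine ih ?_ (fun i hi1 hi2 hi3 => h i (by omega) (by omega) hi3)
        have : r + 1 + d = r + (d+1) := by omega
        rw [this]; exact hbase
      have hd := h (r+1) (by omega) (by omega) hM
      omega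
    · rw [Rfun_stop D (by omega), Rfun_stop D' (by omega)]
      omega

lemma Lfun_congr {D D' : ℕ → ℕ} {r : ℕ} (h : ∀ i, i < r → D i = D' i) :
    Lfun D r = Lfun D' r := by
  have h1 := Lfun_master (c := 0) (Nat.zero_le r) (by simp [Lfun]) (fun i _ hi => (h i hi).le)
  have h2 := Lfun_master (c := 0) (Nat.zero_le r) (by simp [Lfun]) (fun i _ hi => (h i hi).ge)
  omega

lemma Lfun_mono {D D' : ℕ → ℕ} {r : ℕ} (h : ∀ i, i < r → D i ≤ D' i) :
    Lfun D r ≤ Lfun D' r := by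
  have := Lfun_master (c := 0) (Nat.zero_le r) (by simp [Lfun]) (fun i _ hi => h i hi)
  omega

lemma Rfun_congr {D D' : ℕ → ℕ} {M r : ℕ} (h : ∀ i, r < i → i < M → D i = D' i) :
    Rfun D M r = Rfun D' M r := by
  have hb : Rfun D M (r + M) = 0 := Rfun_stop D (by omega)
  have hb' : Rfun D' M (r + M) = 0 := Rfun_stop D' (by omega)
  have h1 := Rfun_master (M := M) (c := 0) (b := r + M) (by omega) (by omega)
    (fun i hi1 _ hi3 => (h i hi1 hi3).le)
  have h2 := Rfun_master (M := M) (c := 0) (b := r + M) (by omega) (by omega)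
    (fun i hi1 _ hi3 => (h i hi1 hi3).ge)
  omega

lemma Rfun_mono {D D' : ℕ → ℕ} {M r : ℕ} (h : ∀ i, r < i → i < M → D i ≤ D' i) :
    Rfun D M r ≤ Rfun D' M r := by
  have hb : Rfun D M (r + M) = 0 := Rfun_stop D (by omega)
  have hb' : Rfun D' M (r + M) = 0 := Rfun_stop D' (by omega)
  have h1 := Rfun_master (M := M) (c := 0) (b := r + M) (by omega) (by omega)
    (fun i hi1 _ hi3 => h i hi1 hi3)
  omega

lemma Lfun_zero_of_zero {D : ℕ → ℕ} {r : ℕ} (h : ∀ i, i < r → D i = 0) :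
    Lfun D r = 0 := by
  induction r with
  | zero => rfl
  | succ m ih =>
    rw [Lfun_succ, ih (fun i hi => h i (by omega)), h m (by omega)]

lemma Rfun_zero_of_zero {D : ℕ → ℕ} {M r : ℕ} (h : ∀ i, r < i → i < M → D i = 0) :
    Rfun D M r = 0 := by
  have h1 : Rfun D M r = Rfun (fun _ => 0) M r := Rfun_congr (fun i hi1 hi2 => h i hi1 hi2)
  rw [h1]
  clear h h1
  obtain ⟨d, hd⟩ : ∃ d, M - 1 - r ≤ d := ⟨M, by omega⟩
  induction d generalizing r with
  | zero => exact Rfun_stop _ (by omega)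
  | succ d ih =>
    by_cases hM : r + 1 < M
    · rw [Rfun_succ _ hM, ih (by omega : M - 1 - (r+1) ≤ d)]
    · exact Rfun_stop _ (by omega)

/-! Move lemmas for the left scan, scan length `t`. -/

lemma L_toward {D D' : ℕ → ℕ} {j t : ℕ} (hj : j + 1 < t) (h2 : 2 ≤ D j)
    (hv : ∀ i, i < t → D' i = if i = j then D i - 2 else if i = j + 1 then D i + 1 else D i) :
    Lfun D' t ≤ Lfun D t := by
  have hcongr : Lfun D' j = Lfun D j := Lfun_congr (fun i hi => by
    rw [hv i (by omega), if_neg (by omega), if_neg (by omega)])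
  have hvj := hv j (by omega); rw [if_pos rfl] at hvj
  have hvj1 := hv (j+1) (by omega); rw [if_neg (by omega), if_pos rfl] at hvj1
  have e1 : Lfun D' (j+1) = (Lfun D j + (D j - 2)) / 2 := by
    rw [Lfun_succ D' j, hcongr, hvj]
  have e2 : Lfun D' (j+2) ≤ Lfun D (j+2) := by
    rw [Lfun_succ D' (j+1), Lfun_succ D (j+1), Lfun_succ D j, e1, hvj1]
    omega
  have := Lfun_master (D := D') (D' := D) (c := 0) (a := j+2) (r := t) (by omega) (by omega)
    (fun i hi1 hi2 => by rw [hv i hi2, if_neg (by omega), if_neg (by omega)])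
  omega

lemma L_away {D D' : ℕ → ℕ} {j t : ℕ} (hj : j + 1 < t) (h2 : 2 ≤ D (j+1))
    (hv : ∀ i, i < t → D' i = if i = j then D i + 1 else if i = j + 1 then D i - 2 else D i) :
    Lfun D' t ≤ Lfun D t := by
  have hcongr : Lfun D' j = Lfun D j := Lfun_congr (fun i hi => by
    rw [hv i (by omega), if_neg (by omega), if_neg (by omega)])
  have hvj := hv j (by omega); rw [if_pos rfl] at hvj
  have hvj1 := hv (j+1) (by omega); rw [if_neg (by omega), if_pos rfl] at hvj1
  have e1 : Lfun D' (j+1) = (Lfun D j + (D j + 1)) / 2 := by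
    rw [Lfun_succ D' j, hcongr, hvj]
  have e2 : Lfun D' (j+2) ≤ Lfun D (j+2) := by
    rw [Lfun_succ D' (j+1), Lfun_succ D (j+1), Lfun_succ D j, e1, hvj1]
    omega
  have := Lfun_master (D := D') (D' := D) (c := 0) (a := j+2) (r := t) (by omega) (by omega)
    (fun i hi1 hi2 => by rw [hv i hi2, if_neg (by omega), if_neg (by omega)])
  omega

lemma L_drop_near {D D' : ℕ → ℕ} {t : ℕ} (ht : 1 ≤ t) (h2 : 2 ≤ D (t-1))
    (hv : ∀ i, i < t → D' i = if i = t - 1 then D i - 2 else D i) :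
    Lfun D' t + 1 = Lfun D t := by
  obtain ⟨m, rfl⟩ : ∃ m, t = m + 1 := ⟨t - 1, by omega⟩
  simp only [Nat.add_sub_cancel] at h2 hv
  have hcongr : Lfun D' m = Lfun D m := Lfun_congr (fun i hi => by
    rw [hv i (by omega), if_neg (by omega)])
  have hvm := hv m (by omega); rw [if_pos rfl] at hvm
  rw [Lfun_succ D' m, Lfun_succ D m, hcongr, hvm]
  omega

lemma L_bump {D D' : ℕ → ℕ} {j t : ℕ}
    (hv : ∀ i, i < t → D' i = if i = j then D i + 1 else D i) :
    Lfun D' t ≤ Lfun D t + 1 := by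
  by_cases hj : j < t
  · have hcongr : Lfun D' j = Lfun D j := Lfun_congr (fun i hi => by
      rw [hv i (by omega), if_neg (by omega)])
    have hvj := hv j (by omega); rw [if_pos rfl] at hvj
    have e1 : Lfun D' (j+1) ≤ Lfun D (j+1) + 1 := by
      rw [Lfun_succ D' j, Lfun_succ D j, hcongr, hvj]
      omega
    exact Lfun_master (a := j+1) (by omega) e1 (fun i hi1 hi2 => by
      rw [hv i hi2, if_neg (by omega)])
  · have : Lfun D' t = Lfun D t := Lfun_congr (fun i hi => by
      rw [hv i hi, if_neg (by omega)])
    omega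

/-! Move lemmas for the right scan at base point 0. -/

lemma R_toward {D D' : ℕ → ℕ} {M q : ℕ} (hq : 1 ≤ q) (hqM : q + 1 < M) (h2 : 2 ≤ D (q+1))
    (hv : ∀ i, 1 ≤ i → i < M → D' i = if i = q + 1 then D i - 2 else if i = q then D i + 1 else D i) :
    Rfun D' M 0 ≤ Rfun D M 0 := by
  have hcongr : Rfun D' M (q+1) = Rfun D M (q+1) := Rfun_congr (fun i hi1 hi2 => by
    rw [hv i (by omega) hi2, if_neg (by omega), if_neg (by omega)])
  have hvq1 := hv (q+1) (by omega) (by omega); rw [if_pos rfl] at hvq1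
  have hvq := hv q (by omega) (by omega); rw [if_neg (by omega), if_pos rfl] at hvq
  have e1 : Rfun D' M q + 1 = Rfun D M q := by
    rw [Rfun_succ D' hqM, Rfun_succ D hqM, hcongr, hvq1]
    omega
  have hq1 : q - 1 + 1 = q := by omega
  have hqM' : q - 1 + 1 < M := by omega
  have e2 : Rfun D' M (q-1) ≤ Rfun D M (q-1) := by
    rw [Rfun_succ D' hqM', Rfun_succ D hqM', hq1, hvq]
    omega
  have := Rfun_master (D := D') (D' := D) (M := M) (c := 0) (b := q - 1) (r := 0) (by omega) (by omega)
    (fun i hi1 hi2 hi3 => by rw [hv i (by omega) hi3, if_neg (by omega), if_neg (by omega)])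
  omega

lemma R_away {D D' : ℕ → ℕ} {M p : ℕ} (hp : 1 ≤ p) (hpM : p + 1 < M) (h2 : 2 ≤ D p)
    (hv : ∀ i, 1 ≤ i → i < M → D' i = if i = p then D i - 2 else if i = p + 1 then D i + 1 else D i) :
    Rfun D' M 0 ≤ Rfun D M 0 := by
  have hcongr : Rfun D' M (p+1) = Rfun D M (p+1) := Rfun_congr (fun i hi1 hi2 => by
    rw [hv i (by omega) hi2, if_neg (by omega), if_neg (by omega)])
  have hvp1 := hv (p+1) (by omega) (by omega); rw [if_neg (by omega), if_pos rfl] at hvp1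
  have hvp := hv p (by omega) (by omega); rw [if_pos rfl] at hvp
  have e1 : Rfun D' M p ≤ Rfun D M p + 1 := by
    rw [Rfun_succ D' hpM, Rfun_succ D hpM, hcongr, hvp1]
    omega
  have hp1 : p - 1 + 1 = p := by omega
  have hpM' : p - 1 + 1 < M := by omega
  have e2 : Rfun D' M (p-1) ≤ Rfun D M (p-1) := by
    rw [Rfun_succ D' hpM', Rfun_succ D hpM', hp1, hvp]
    omega
  have := Rfun_master (D := D') (D' := D) (M := M) (c := 0) (b := p - 1) (r := 0) (by omega) (by omega)
    (fun i hi1 hi2 hi3 => by rw [hv i (by omega) hi3, if_neg (by omega), if_neg (by omega)])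
  omega

lemma R_drop_first {D D' : ℕ → ℕ} {M : ℕ} (h1M : 1 < M) (h2 : 2 ≤ D 1)
    (hv : ∀ i, 1 ≤ i → i < M → D' i = if i = 1 then D i - 2 else D i) :
    Rfun D' M 0 + 1 = Rfun D M 0 := by
  have hcongr : Rfun D' M 1 = Rfun D M 1 := Rfun_congr (fun i hi1 hi2 => by
    rw [hv i (by omega) hi2, if_neg (by omega)])
  have hv1 := hv 1 (by omega) (by omega); rw [if_pos rfl] at hv1
  rw [Rfun_succ D' h1M, Rfun_succ D h1M, hcongr, hv1]
  simp only [Nat.zero_add]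
  omega

lemma R_bump {D D' : ℕ → ℕ} {M j : ℕ}
    (hv : ∀ i, 1 ≤ i → i < M → D' i = if i = j then D i + 1 else D i) :
    Rfun D' M 0 ≤ Rfun D M 0 + 1 := by
  by_cases hj : 1 ≤ j ∧ j < M
  · have hcongr : Rfun D' M j = Rfun D M j := Rfun_congr (fun i hi1 hi2 => by
      rw [hv i (by omega) hi2, if_neg (by omega)])
    have hvj := hv j (by omega) (by omega); rw [if_pos rfl] at hvj
    have hj1 : j - 1 + 1 = j := by omega
    have hjM : j - 1 + 1 < M := by omega
    have e1 : Rfun D' M (j-1) ≤ Rfun D M (j-1) + 1 := by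
      rw [Rfun_succ D' hjM, Rfun_succ D hjM, hj1, hcongr, hvj]
      omega
    have := Rfun_master (M := M) (c := 1) (b := j - 1) (r := 0) (by omega) e1
      (fun i hi1 hi2 hi3 => by rw [hv i (by omega) hi3, if_neg (by omega)])
    omega
  · have : Rfun D' M 0 = Rfun D M 0 := Rfun_congr (fun i hi1 hi2 => by
      rw [hv i (by omega) hi2, if_neg (by omega)])
    omega

/-! Extension, translation, shift. -/

lemma RAux_mono_fuel (D : ℕ → ℕ) {f f' : ℕ} (r : ℕ) (h : f ≤ f') :
    RAux D f r ≤ RAux D f' r := by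
  induction f generalizing f' r with
  | zero => simp [RAux]
  | succ f ih =>
    obtain ⟨g, rfl⟩ : ∃ g, f' = g + 1 := ⟨f' - 1, by omega⟩
    have := ih (f' := g) (r + 1) (by omega)
    show (D (r+1) + RAux D f (r+1))/2 ≤ (D (r+1) + RAux D g (r+1))/2
    omega

lemma Rfun_extend (D : ℕ → ℕ) {M M' : ℕ} (r : ℕ) (h : M ≤ M') :
    Rfun D M r ≤ Rfun D M' r :=
  RAux_mono_fuel D r (by omega)

lemma RAux_translate (D : ℕ → ℕ) (f a : ℕ) :
    ∀ r, RAux (fun i => D (a + i)) f r = RAux D f (a + r) := by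
  induction f with
  | zero => intro r; rfl
  | succ f ih =>
    intro r
    show (D (a + (r+1)) + RAux (fun i => D (a + i)) f (r+1))/2
      = (D (a + r + 1) + RAux D f (a + r + 1))/2
    rw [ih (r+1), show a + (r+1) = a + r + 1 by omega]

lemma Rfun_translate (D : ℕ → ℕ) (a M : ℕ) :
    Rfun (fun i => D (a + i)) M 0 = Rfun D (a + M) a := by
  unfold Rfun
  rw [RAux_translate D (M - 1 - 0) a 0, Nat.add_zero]
  congr 1
  omega

lemma Lfun_shift_ge (E : ℕ → ℕ) (a : ℕ) : ∀ t, Lfun (fun i => E (a + i)) t ≤ Lfun E (a + t) := by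
  intro t
  induction t with
  | zero => simp [Lfun]
  | succ t ih =>
    have h1 : Lfun (fun i => E (a + i)) (t+1) = (Lfun (fun i => E (a+i)) t + E (a+t))/2 := rfl
    have h2 : Lfun E (a + (t+1)) = (Lfun E (a+t) + E (a+t))/2 := by
      rw [show a + (t+1) = (a+t)+1 by omega, Lfun_succ]
    omega

/-! The coverage lemma: a distribution with `k` pebbles on a line covers at most `3k/2` points. -/

def CovP (D : ℕ → ℕ) (M r : ℕ) : Prop := 1 ≤ D r ∨ 1 ≤ Lfun D r ∨ 1 ≤ Rfun D M r

instance (D : ℕ → ℕ) (M r : ℕ) : Decidable (CovP D M r) := by unfold CovP; infer_instance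

def coveredSet (D : ℕ → ℕ) (M : ℕ) : Finset ℕ :=
  (Finset.range M).filter (CovP D M)

lemma mem_coveredSet {D : ℕ → ℕ} {M r : ℕ} :
    r ∈ coveredSet D M ↔ r < M ∧ (1 ≤ D r ∨ 1 ≤ Lfun D r ∨ 1 ≤ Rfun D M r) := by
  simp [coveredSet, CovP, Finset.mem_filter, Finset.mem_range]

lemma R_chain {D : ℕ → ℕ} {M : ℕ} : ∀ (d x : ℕ), (∀ i, x < i → i ≤ x + d → D i = 0) →
    Rfun D M x ≤ Rfun D M (x + d) / 2 ^ d := by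
  intro d
  induction d with
  | zero => intro x _; simp
  | succ d ih =>
    intro x hz
    have h1 : Rfun D M x ≤ Rfun D M (x+1) / 2 := by
      by_cases hM : x + 1 < M
      · rw [Rfun_succ D hM, hz (x+1) (by omega) (by omega)]; omega
      · rw [Rfun_stop D (by omega)]; omega
    have h2 := ih (x+1) (fun i hi1 hi2 => hz i (by omega) (by omega))
    calc Rfun D M x ≤ Rfun D M (x+1)/2 := h1
      _ ≤ (Rfun D M (x+1+d) / 2^d) / 2 := Nat.div_le_div_right h2
      _ = Rfun D M (x + (d+1)) / 2^(d+1) := by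
          rw [Nat.div_div_eq_div_mul, show x+1+d = x+(d+1) by omega, pow_succ]

/-- From a covered vertex strictly left of `y` (through a zero region), `Rfun` at `y` is ≥ 2. -/
lemma R_ge_two {D : ℕ → ℕ} {M x y : ℕ} (hxy : x < y) (hz : ∀ i, x < i → i ≤ y → D i = 0)
    (hx : 1 ≤ Rfun D M x) : 2 ≤ Rfun D M y := by
  have := R_chain (M := M) (y - x) x (fun i h1 h2 => hz i h1 (by omega))
  rw [show x + (y - x) = y by omega] at this
  have h2 : 1 ≤ Rfun D M y / 2 ^ (y - x) := le_trans hx this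
  have h3 : 2 ^ (y - x) ≤ Rfun D M y := (Nat.one_le_div_iff (Nat.pow_pos (by norm_num))).mp h2
  have h4 : 2 ^ 1 ≤ 2 ^ (y - x) := Nat.pow_le_pow_right (by norm_num) (by omega)
  omega

/-- Same, but just propagating positivity to `y`. -/
lemma R_ge_one {D : ℕ → ℕ} {M x y : ℕ} (hxy : x ≤ y) (hz : ∀ i, x < i → i ≤ y → D i = 0)
    (hx : 1 ≤ Rfun D M x) : 1 ≤ Rfun D M y := by
  have := R_chain (M := M) (y - x) x (fun i h1 h2 => hz i h1 (by omega))
  rw [show x + (y - x) = y by omega] at this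
  by_contra h
  have hy : Rfun D M y = 0 := by omega
  rw [hy, Nat.zero_div] at this
  omega

theorem cover_bound : ∀ (k : ℕ) (D : ℕ → ℕ) (M : ℕ), (∑ i ∈ Finset.range M, D i) ≤ k →
    2 * (coveredSet D M).card ≤ 3 * ∑ i ∈ Finset.range M, D i := by
  intro k
  induction k with
  | zero =>
    intro D M hsum
    have hz : ∀ i, i < M → D i = 0 := by
      intro i hi
      have := Finset.single_le_sum (f := D) (fun j _ => Nat.zero_le _) (Finset.mem_range.mpr hi)
      omega
    have : coveredSet D M = ∅ := by
      apply Finset.eq_empty_of_forall_notMem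
      intro r hr
      rw [mem_coveredSet] at hr
      obtain ⟨hrM, hc⟩ := hr
      rw [hz r hrM, Lfun_zero_of_zero (fun i hi => hz i (by omega)),
        Rfun_zero_of_zero (fun i h1 h2 => hz i h2)] at hc
      omega
    rw [this]
    simp
  | succ k ih =>
    intro D M hsum
    by_cases hk : (∑ i ∈ Finset.range M, D i) ≤ k
    · exact ih D M hk
    have hex : ∃ i, i < M ∧ 1 ≤ D i := by
      by_contra h
      push_neg at h
      have : (∑ i ∈ Finset.range M, D i) = 0 :=
        Finset.sum_eq_zero (fun i hi => by
          have := h i (Finset.mem_range.mp hi); omega)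
      omega
    classical
    let s := Nat.find hex
    obtain ⟨hsM, hDs⟩ : s < M ∧ 1 ≤ D s := Nat.find_spec hex
    have hDzero : ∀ i, i < s → D i = 0 := by
      intro i hi
      have := Nat.find_min hex hi
      push_neg at this
      have hiM : i < M := by omega
      have := this hiM
      omega
    have hL0 : ∀ r, r ≤ s → Lfun D r = 0 :=
      fun r hr => Lfun_zero_of_zero (fun i hi => hDzero i (by omega))
    have hsum_split : (∑ i ∈ Finset.range M, D i) =
        D s + ∑ i ∈ Finset.range M \ {s}, D i := by
      rw [Finset.sum_eq_sum_sdiff_singleton_add (Finset.mem_range.mpr hsM) D]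
      omega
    have hRleft : ∀ x, x < s → (1 ≤ D x ∨ 1 ≤ Lfun D x ∨ 1 ≤ Rfun D M x) →
        1 ≤ Rfun D M x := by
      intro x hxs hc
      rcases hc with h | h | h
      · rw [hDzero x hxs] at h; omega
      · rw [hL0 x (by omega)] at h; omega
      · exact h
    have hktotal : (∑ i ∈ Finset.range M, D i) = k + 1 := by omega
    by_cases h2s : 2 ≤ D s
    · -- remove two pebbles at s
      set D' : ℕ → ℕ := Function.update D s (D s - 2) with hD'def
      have hv : ∀ i, D' i = if i = s then D s - 2 else D i :=
        fun i => Function.update_apply D s _ i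
      have hvs : D' s = D s - 2 := by rw [hv]; simp
      have hvne : ∀ i, i ≠ s → D' i = D i := fun i hi => by rw [hv, if_neg hi]
      have hmono : ∀ i, D' i ≤ D i := by
        intro i
        by_cases h : i = s
        · subst h; rw [hvs]; omega
        · exact le_of_eq (hvne i h)
      have hsum' : (∑ i ∈ Finset.range M, D' i) + 2 = ∑ i ∈ Finset.range M, D i := by
        rw [hsum_split, Finset.sum_eq_sum_sdiff_singleton_add (Finset.mem_range.mpr hsM) D', hvs]
        have heq : ∑ i ∈ Finset.range M \ {s}, D' i = ∑ i ∈ Finset.range M \ {s}, D i :=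
          Finset.sum_congr rfl (fun i hi => by
            rcases Finset.mem_sdiff.mp hi with ⟨_, h2⟩
            exact hvne i (by simpa using h2))
        omega
      have hRcongr : ∀ t, s ≤ t → Rfun D' M t = Rfun D M t :=
        fun t ht => Rfun_congr (fun i h1 h2 => hvne i (by omega))
      have hL0' : ∀ r, r ≤ s → Lfun D' r = 0 := fun r hr =>
        Lfun_zero_of_zero (fun i hi => by rw [hvne i (by omega)]; exact hDzero i (by omega))
      have hRdef : ∀ t, t < s → Rfun D M t ≤ Rfun D' M t + 1 := by
        intro t ht
        have h1 : s - 1 + 1 = s := by omega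
        have h2 : s - 1 + 1 < M := by omega
        have hbase : Rfun D M (s-1) ≤ Rfun D' M (s-1) + 1 := by
          rw [Rfun_succ D h2, Rfun_succ D' h2, h1, hRcongr s le_rfl, hvs]
          omega
        exact Rfun_master (D := D) (D' := D') (by omega : t ≤ s - 1) hbase
          (fun i hi1 hi2 hi3 => le_of_eq (hvne i (by omega)).symm)
      have hsub : coveredSet D' M ⊆ coveredSet D M := by
        intro r hr
        rw [mem_coveredSet] at hr ⊢
        refine ⟨hr.1, ?_⟩
        rcases hr.2 with h | h | h
        · exact Or.inl (le_trans h (hmono r))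
        · exact Or.inr (Or.inl (le_trans h (Lfun_mono (fun i _ => hmono i))))
        · exact Or.inr (Or.inr (le_trans h (Rfun_mono (fun i _ _ => hmono i))))
      set KS := coveredSet D M \ coveredSet D' M with hKS
      have hcard : (coveredSet D M).card = (coveredSet D' M).card + KS.card := by
        rw [hKS, Finset.card_sdiff_of_subset hsub]
        have := Finset.card_le_card hsub
        omega
      have hkill : ∀ x ∈ KS, x < M ∧
          ¬ (1 ≤ D' x ∨ 1 ≤ Lfun D' x ∨ 1 ≤ Rfun D' M x) ∧
          (1 ≤ D x ∨ 1 ≤ Lfun D x ∨ 1 ≤ Rfun D M x) := by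
        intro x hx
        rw [hKS, Finset.mem_sdiff, mem_coveredSet] at hx
        obtain ⟨⟨hxM, hc⟩, hnc⟩ := hx
        exact ⟨hxM, fun hcp => hnc (mem_coveredSet.mpr ⟨hxM, hcp⟩), hc⟩
      have kill_left : ∀ x ∈ KS, ∀ y ∈ KS, x < s → y < s → x = y := by
        intro x hx y hy hxs hys
        by_contra hne
        wlog hlt : x < y generalizing x y
        · exact this y hy x hx hys hxs (Ne.symm hne) (by omega)
        obtain ⟨hxM, hxnc, hxc⟩ := hkill x hx
        obtain ⟨hyM, hync, hyc⟩ := hkill y hy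
        have hRx : 1 ≤ Rfun D M x := hRleft x hxs hxc
        have hRy2 : 2 ≤ Rfun D M y :=
          R_ge_two hlt (fun i h1 h2 => hDzero i (by omega)) hRx
        have := hRdef y hys
        exact hync (Or.inr (Or.inr (by omega)))
      have hLdef : ∀ t, s < t → Lfun D t ≤ Lfun D' t + 1 := by
        intro t ht
        have hbase : Lfun D (s+1) ≤ Lfun D' (s+1) + 1 := by
          rw [Lfun_succ D s, Lfun_succ D' s, hL0 s le_rfl, hL0' s le_rfl, hvs]
          omega
        exact Lfun_master (D := D) (D' := D') (by omega : s+1 ≤ t) hbase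
          (fun i h1 h2 => le_of_eq (hvne i (by omega)).symm)
      have kill_right : ∀ x ∈ KS, ∀ y ∈ KS, s < x → s < y → x = y := by
        intro x hx y hy hsx hsy
        by_contra hne
        wlog hlt : x < y generalizing x y
        · exact this y hy x hx hsy hsx (Ne.symm hne) (by omega)
        obtain ⟨hxM, hxnc, hxc⟩ := hkill x hx
        obtain ⟨hyM, hync, hyc⟩ := hkill y hy
        have hDx : D x = 0 := by
          by_contra h
          exact hxnc (Or.inl (by rw [hvne x (by omega)]; omega))
        have hRx : Rfun D M x = 0 := by
          by_contra h
          exact hxnc (Or.inr (Or.inr (by rw [hRcongr x (by omega)]; omega)))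
        have hLx : 1 ≤ Lfun D x := by
          rcases hxc with h | h | h
          · omega
          · exact h
          · omega
        have hLx' : Lfun D' x = 0 := by
          by_contra h
          exact hxnc (Or.inr (Or.inl (by omega)))
        have hLx1 : Lfun D x = 1 := by have := hLdef x hsx; omega
        have hbase : Lfun D (x+1) ≤ Lfun D' (x+1) + 0 := by
          rw [Lfun_succ D x, Lfun_succ D' x, hLx1, hLx', hDx, hvne x (by omega), hDx]
        have hLy : Lfun D y ≤ Lfun D' y := by
          have := Lfun_master (D := D) (D' := D') (by omega : x+1 ≤ y) hbase
            (fun i h1 h2 => le_of_eq (hvne i (by omega)).symm)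
          omega
        have hLyD : 1 ≤ Lfun D y := by
          have hDy : D y = 0 := by
            by_contra h
            exact hync (Or.inl (by rw [hvne y (by omega)]; omega))
          have hRy : Rfun D M y = 0 := by
            by_contra h
            exact hync (Or.inr (Or.inr (by rw [hRcongr y (by omega)]; omega)))
          rcases hyc with h | h | h
          · omega
          · exact h
          · omega
        exact hync (Or.inr (Or.inl (by omega)))
      have hsplit : KS ⊆ (KS.filter (· < s)) ∪ {s} ∪ (KS.filter (fun x => s < x)) := by
        intro x hx
        simp only [Finset.mem_union, Finset.mem_filter, Finset.mem_singleton]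
        rcases lt_trichotomy x s with h | h | h
        · exact Or.inl (Or.inl ⟨hx, h⟩)
        · exact Or.inl (Or.inr h)
        · exact Or.inr ⟨hx, h⟩
      have c1 : (KS.filter (· < s)).card ≤ 1 := Finset.card_le_one.mpr (fun a ha b hb => by
        simp only [Finset.mem_filter] at ha hb
        exact kill_left a ha.1 b hb.1 ha.2 hb.2)
      have c2 : (KS.filter (fun x => s < x)).card ≤ 1 := Finset.card_le_one.mpr (fun a ha b hb => by
        simp only [Finset.mem_filter] at ha hb
        exact kill_right a ha.1 b hb.1 ha.2 hb.2)
      have hks3 : KS.card ≤ 3 := by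
        have h1 := Finset.card_le_card hsplit
        have h2 := Finset.card_union_le ((KS.filter (· < s)) ∪ {s}) (KS.filter (fun x => s < x))
        have h3 := Finset.card_union_le (KS.filter (· < s)) ({s} : Finset ℕ)
        have h4 : ({s} : Finset ℕ).card = 1 := Finset.card_singleton s
        omega
      have hih := ih D' M (by omega)
      omega
    · -- D s = 1 : remove the single pebble at s
      have hDs1 : D s = 1 := by omega
      set D' : ℕ → ℕ := Function.update D s 0 with hD'def
      have hv : ∀ i, D' i = if i = s then 0 else D i :=
        fun i => Function.update_apply D s _ i
      have hvs : D' s = 0 := by rw [hv]; simp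
      have hvne : ∀ i, i ≠ s → D' i = D i := fun i hi => by rw [hv, if_neg hi]
      have hmono : ∀ i, D' i ≤ D i := by
        intro i
        by_cases h : i = s
        · subst h; rw [hvs]; omega
        · exact le_of_eq (hvne i h)
      have hsum' : (∑ i ∈ Finset.range M, D' i) + 1 = ∑ i ∈ Finset.range M, D i := by
        rw [hsum_split, Finset.sum_eq_sum_sdiff_singleton_add (Finset.mem_range.mpr hsM) D', hvs]
        have heq : ∑ i ∈ Finset.range M \ {s}, D' i = ∑ i ∈ Finset.range M \ {s}, D i :=
          Finset.sum_congr rfl (fun i hi => by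
            rcases Finset.mem_sdiff.mp hi with ⟨_, h2⟩
            exact hvne i (by simpa using h2))
        omega
      have hRcongr : ∀ t, s ≤ t → Rfun D' M t = Rfun D M t :=
        fun t ht => Rfun_congr (fun i h1 h2 => hvne i (by omega))
      have hL0' : ∀ r, r ≤ s → Lfun D' r = 0 := fun r hr =>
        Lfun_zero_of_zero (fun i hi => by rw [hvne i (by omega)]; exact hDzero i (by omega))
      have hRdef : ∀ t, t < s → Rfun D M t ≤ Rfun D' M t + 1 := by
        intro t ht
        have h1 : s - 1 + 1 = s := by omega
        have h2 : s - 1 + 1 < M := by omega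
        have hbase : Rfun D M (s-1) ≤ Rfun D' M (s-1) + 1 := by
          rw [Rfun_succ D h2, Rfun_succ D' h2, h1, hRcongr s le_rfl, hvs, hDs1]
          omega
        exact Rfun_master (D := D) (D' := D') (by omega : t ≤ s - 1) hbase
          (fun i hi1 hi2 hi3 => le_of_eq (hvne i (by omega)).symm)
      have hsub : coveredSet D' M ⊆ coveredSet D M := by
        intro r hr
        rw [mem_coveredSet] at hr ⊢
        refine ⟨hr.1, ?_⟩
        rcases hr.2 with h | h | h
        · exact Or.inl (le_trans h (hmono r))
        · exact Or.inr (Or.inl (le_trans h (Lfun_mono (fun i _ => hmono i))))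
        · exact Or.inr (Or.inr (le_trans h (Rfun_mono (fun i _ _ => hmono i))))
      set KS := coveredSet D M \ coveredSet D' M with hKS
      have hcard : (coveredSet D M).card = (coveredSet D' M).card + KS.card := by
        rw [hKS, Finset.card_sdiff_of_subset hsub]
        have := Finset.card_le_card hsub
        omega
      have hkill : ∀ x ∈ KS, x < M ∧
          ¬ (1 ≤ D' x ∨ 1 ≤ Lfun D' x ∨ 1 ≤ Rfun D' M x) ∧
          (1 ≤ D x ∨ 1 ≤ Lfun D x ∨ 1 ≤ Rfun D M x) := by
        intro x hx
        rw [hKS, Finset.mem_sdiff, mem_coveredSet] at hx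
        obtain ⟨⟨hxM, hc⟩, hnc⟩ := hx
        exact ⟨hxM, fun hcp => hnc (mem_coveredSet.mpr ⟨hxM, hcp⟩), hc⟩
      have kill_left : ∀ x ∈ KS, ∀ y ∈ KS, x < s → y < s → x = y := by
        intro x hx y hy hxs hys
        by_contra hne
        wlog hlt : x < y generalizing x y
        · exact this y hy x hx hys hxs (Ne.symm hne) (by omega)
        obtain ⟨hxM, hxnc, hxc⟩ := hkill x hx
        obtain ⟨hyM, hync, hyc⟩ := hkill y hy
        have hRx : 1 ≤ Rfun D M x := hRleft x hxs hxc
        have hRy2 : 2 ≤ Rfun D M y :=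
          R_ge_two hlt (fun i h1 h2 => hDzero i (by omega)) hRx
        have := hRdef y hys
        exact hync (Or.inr (Or.inr (by omega)))
      have hLeq : ∀ t, s < t → Lfun D' t = Lfun D t := by
        intro t ht
        have hb1 : Lfun D (s+1) = 0 := by
          rw [Lfun_succ D s, hL0 s le_rfl, hDs1]
        have hb2 : Lfun D' (s+1) = 0 := by
          rw [Lfun_succ D' s, hL0' s le_rfl, hvs]
        have hle := Lfun_master (D := D') (D' := D) (c := 0) (by omega : s+1 ≤ t) (by omega)
          (fun i h1 h2 => le_of_eq (hvne i (by omega)))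
        have hge := Lfun_master (D := D) (D' := D') (c := 0) (by omega : s+1 ≤ t) (by omega)
          (fun i h1 h2 => le_of_eq (hvne i (by omega)).symm)
        omega
      have hnoright : ∀ x ∈ KS, x ≤ s := by
        intro x hx
        by_contra h
        push_neg at h
        obtain ⟨hxM, hxnc, hxc⟩ := hkill x hx
        apply hxnc
        rcases hxc with hc | hc | hc
        · exact Or.inl (by rw [hvne x (by omega)]; omega)
        · exact Or.inr (Or.inl (by rw [hLeq x h]; omega))
        · exact Or.inr (Or.inr (by rw [hRcongr x (by omega)]; omega))
      have hs_survives : ∀ b ∈ KS, b < s → ¬ (s ∈ KS) := by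
        intro b hb hbs hsk
        obtain ⟨hbM, hbnc, hbc⟩ := hkill b hb
        have hRb : 1 ≤ Rfun D M b := hRleft b hbs hbc
        have hRs1 : 1 ≤ Rfun D M (s-1) :=
          R_ge_one (by omega) (fun i h1 h2 => hDzero i (by omega)) hRb
        have hRs : 1 ≤ Rfun D M s := by
          have h2' : s - 1 + 1 = s := by omega
          have hlt : s - 1 + 1 < M := by omega
          rw [Rfun_succ D hlt, h2', hDs1] at hRs1
          omega
        obtain ⟨hsM', hsnc, _⟩ := hkill s hsk
        exact hsnc (Or.inr (Or.inr (by rw [hRcongr s le_rfl]; omega)))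
      have hks1 : KS.card ≤ 1 := Finset.card_le_one.mpr (by
        intro a ha b hb
        have has := hnoright a ha
        have hbs := hnoright b hb
        rcases eq_or_lt_of_le has with h1 | h1 <;> rcases eq_or_lt_of_le hbs with h2 | h2
        · omega
        · exact absurd (h1 ▸ ha) (hs_survives b hb h2)
        · exact absurd (h2 ▸ hb) (hs_survives a ha h1)
        · exact kill_left a ha b hb h1 h2)
      have hih := ih D' M (by omega)
      omega

/-! The cycle potential. -/


/-- Unrolled distribution around the cycle, starting at `r`. -/
def cex {n : ℕ} (D : Fin n → ℕ) (r : Fin n) : ℕ → ℕ :=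
  fun i => D ⟨(r.val + i) % n, Nat.mod_lt _ r.pos⟩

/-- Cyclic position of `x` relative to `r`. -/
def cpos {n : ℕ} (r x : Fin n) : ℕ :=
  if r.val ≤ x.val then x.val - r.val else x.val + n - r.val

lemma cpos_lt {n : ℕ} (r x : Fin n) : cpos r x < n := by
  have h1 := r.isLt; have h2 := x.isLt; have h3 := r.pos
  unfold cpos; split <;> omega

lemma cpos_self {n : ℕ} (r : Fin n) : cpos r r = 0 := by simp [cpos]

lemma cpos_spec {n : ℕ} (r x : Fin n) : (r.val + cpos r x) % n = x.val := by
  unfold cpos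
  split
  · rw [show r.val + (x.val - r.val) = x.val by omega]
    exact Nat.mod_eq_of_lt x.isLt
  · rw [show r.val + (x.val + n - r.val) = x.val + n by
      have := r.isLt; omega]
    rw [Nat.add_mod_right]
    exact Nat.mod_eq_of_lt x.isLt

lemma cex_at {n : ℕ} (D : Fin n → ℕ) (r x : Fin n) : cex D r (cpos r x) = D x := by
  unfold cex
  congr 1
  exact Fin.ext (cpos_spec r x)

lemma idx_inj {n : ℕ} (r : Fin n) {i : ℕ} (hi : i < n) {x : Fin n}
    (h : (r.val + i) % n = x.val) : i = cpos r x := by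
  have h2 := cpos_spec r x
  have hmod : r.val + i ≡ r.val + cpos r x [MOD n] := by
    unfold Nat.ModEq
    omega
  have h3 := Nat.ModEq.add_left_cancel' r.val hmod
  have h4 := cpos_lt r x
  unfold Nat.ModEq at h3
  rwa [Nat.mod_eq_of_lt hi, Nat.mod_eq_of_lt h4] at h3

lemma cpos_zero_iff {n : ℕ} (r x : Fin n) : cpos r x = 0 ↔ x = r := by
  constructor
  · intro h
    have := cpos_spec r x
    rw [h, Nat.add_zero, Nat.mod_eq_of_lt r.isLt] at this
    exact Fin.ext this.symm
  · intro h; rw [h]; exact cpos_self r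

/-- Description of the unrolled distribution after a pebbling move. -/
lemma cex_applyMove {n : ℕ} (D : Fin n → ℕ) (r a b : Fin n) (hab : a ≠ b) :
    ∀ i, i < n → cex (applyMove D (a,b)) r i =
      if i = cpos r a then cex D r i - 2
      else if i = cpos r b then cex D r i + 1 else cex D r i := by
  intro i hi
  by_cases ha : i = cpos r a
  · subst ha
    rw [if_pos rfl, cex_at, cex_at]
    simp [applyMove]
  · by_cases hb : i = cpos r b
    · subst hb
      rw [if_neg ha, if_pos rfl, cex_at, cex_at]
      simp [applyMove, hab.symm]
    · rw [if_neg ha, if_neg hb]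
      unfold cex
      have hva : (⟨(r.val + i) % n, Nat.mod_lt _ r.pos⟩ : Fin n) ≠ a :=
        fun h => ha (idx_inj r hi (congrArg Fin.val h))
      have hvb : (⟨(r.val + i) % n, Nat.mod_lt _ r.pos⟩ : Fin n) ≠ b :=
        fun h => hb (idx_inj r hi (congrArg Fin.val h))
      simp [applyMove, hva, hvb]

/-- The potential of target `r`. -/
def Phi {n : ℕ} (D : Fin n → ℕ) (r : Fin n) : ℕ :=
  D r + Rfun (cex D r) n 0 + Lfun (fun i => cex D r (i+1)) (n-1)

lemma helper_mod_eq {n d : ℕ} (hn : 0 < n) (hd : d < 2*n) (h : d % n = 1) :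
    d = 1 ∨ d = n + 1 := by
  by_cases hdn : d < n
  · left; rwa [Nat.mod_eq_of_lt hdn] at h
  · right
    rw [Nat.mod_eq_sub_mod (by omega), Nat.mod_eq_of_lt (by omega)] at h
    omega

lemma cycle_adj_val {n : ℕ} (hn : 3 ≤ n) {a b : Fin n}
    (h : (cycleGraph n).Adj a b) :
    (b.val = a.val + 1) ∨ (a.val = b.val + 1) ∨ (a.val = n - 1 ∧ b.val = 0)
      ∨ (b.val = n - 1 ∧ a.val = 0) := by
  have ha := a.isLt; have hb := b.isLt
  rcases cycleGraph_adj'.mp h with h1 | h1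
  · rw [Fin.sub_def] at h1
    simp only at h1
    have := helper_mod_eq (n := n) (d := n - b.val + a.val) (by omega) (by omega) h1
    omega
  · rw [Fin.sub_def] at h1
    simp only at h1
    have := helper_mod_eq (n := n) (d := n - a.val + b.val) (by omega) (by omega) h1
    omega

set_option maxHeartbeats 1000000 in
lemma Phi_mono {n : ℕ} (hn : 3 ≤ n) (D : Fin n → ℕ) (r a b : Fin n)
    (hadj : (cycleGraph n).Adj a b) (h2 : 2 ≤ D a) :
    Phi (applyMove D (a, b)) r ≤ Phi D r := by
  have hab : a ≠ b := hadj.ne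
  have hvals := cycle_adj_val hn hadj
  have hpl := cpos_lt r a
  have hql := cpos_lt r b
  have hpq : cpos r a ≠ cpos r b := fun h => hab (by
    have g1 := cpos_spec r a
    have g2 := cpos_spec r b
    rw [h] at g1
    exact Fin.ext (g1.symm.trans g2))
  have he' := cex_applyMove D r a b hab
  have hea : cex D r (cpos r a) = D a := cex_at D r a
  have heb : cex D r (cpos r b) = D b := cex_at D r b
  have hpdef : (r.val ≤ a.val ∧ cpos r a = a.val - r.val)
      ∨ (a.val < r.val ∧ cpos r a = a.val + n - r.val) := by
    by_cases h : r.val ≤ a.val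
    · exact Or.inl ⟨h, by simp [cpos, h]⟩
    · exact Or.inr ⟨by omega, by simp [cpos, h]⟩
  have hqdef : (r.val ≤ b.val ∧ cpos r b = b.val - r.val)
      ∨ (b.val < r.val ∧ cpos r b = b.val + n - r.val) := by
    by_cases h : r.val ≤ b.val
    · exact Or.inl ⟨h, by simp [cpos, h]⟩
    · exact Or.inr ⟨by omega, by simp [cpos, h]⟩
  have hrl := r.isLt
  have hal := a.isLt
  have hbl := b.isLt
  have hclass : (1 ≤ cpos r a ∧ cpos r b = cpos r a + 1)
      ∨ (1 ≤ cpos r b ∧ cpos r a = cpos r b + 1)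
      ∨ (cpos r a = n - 1 ∧ cpos r b = 0)
      ∨ (cpos r a = 1 ∧ cpos r b = 0)
      ∨ (cpos r a = 0 ∧ cpos r b = 1)
      ∨ (cpos r a = 0 ∧ cpos r b = n - 1) := by
    rcases hvals with h | h | h | h <;>
      rcases hpdef with ⟨h1, hh2⟩ | ⟨h1, hh2⟩ <;>
      rcases hqdef with ⟨h3, h4⟩ | ⟨h3, h4⟩ <;> omega
  simp only [Phi]
  rcases hclass with ⟨hc1, hc2⟩ | ⟨hc1, hc2⟩ | ⟨hc1, hc2⟩ | ⟨hc1, hc2⟩ | ⟨hc1, hc2⟩ | ⟨hc1, hc2⟩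
  · -- Case A : away from r, clockwise
    have hra : r ≠ a := fun h => by
      have := (cpos_zero_iff r a).mpr h.symm; omega
    have hrb : r ≠ b := fun h => by
      have := (cpos_zero_iff r b).mpr h.symm; omega
    have hmv : applyMove D (a,b) r = D r := by
      unfold applyMove; rw [if_neg hra, if_neg hrb]
    have hcw : Rfun (cex (applyMove D (a,b)) r) n 0 ≤ Rfun (cex D r) n 0 := by
      apply R_away hc1 (by omega) (by rw [hea]; exact h2)
      intro i h1i hiM
      rw [he' i hiM, hc2]
    have hccw : Lfun (fun i => cex (applyMove D (a,b)) r (i+1)) (n-1)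
        ≤ Lfun (fun i => cex D r (i+1)) (n-1) := by
      apply L_toward (j := cpos r a - 1) (by omega)
        (by show 2 ≤ cex D r (cpos r a - 1 + 1)
            rw [show cpos r a - 1 + 1 = cpos r a by omega, hea]; exact h2)
      intro i hi
      show cex (applyMove D (a,b)) r (i+1) = _
      rw [he' (i+1) (by omega)]
      by_cases g1 : i = cpos r a - 1
      · rw [if_pos (show i + 1 = cpos r a by omega), if_pos g1]
      · by_cases g2 : i = cpos r a
        · rw [if_neg (by omega), if_pos (show i + 1 = cpos r b by omega),
            if_neg g1, if_pos (by omega)]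
        · rw [if_neg (by omega), if_neg (by omega), if_neg g1, if_neg (by omega)]
    rw [hmv]
    omega
  · -- Case B : toward r, clockwise
    have hra : r ≠ a := fun h => by
      have := (cpos_zero_iff r a).mpr h.symm; omega
    have hrb : r ≠ b := fun h => by
      have := (cpos_zero_iff r b).mpr h.symm; omega
    have hmv : applyMove D (a,b) r = D r := by
      unfold applyMove; rw [if_neg hra, if_neg hrb]
    have hcw : Rfun (cex (applyMove D (a,b)) r) n 0 ≤ Rfun (cex D r) n 0 := by
      apply R_toward hc1 (by omega)
        (by show 2 ≤ cex D r (cpos r b + 1)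
            rw [show cpos r b + 1 = cpos r a by omega, hea]; exact h2)
      intro i h1i hiM
      rw [he' i hiM, hc2]
    have hccw : Lfun (fun i => cex (applyMove D (a,b)) r (i+1)) (n-1)
        ≤ Lfun (fun i => cex D r (i+1)) (n-1) := by
      apply L_away (j := cpos r b - 1) (by omega)
        (by show 2 ≤ cex D r (cpos r b - 1 + 1 + 1)
            rw [show cpos r b - 1 + 1 + 1 = cpos r a by omega, hea]; exact h2)
      intro i hi
      show cex (applyMove D (a,b)) r (i+1) = _
      rw [he' (i+1) (by omega)]
      by_cases g1 : i = cpos r b - 1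
      · rw [if_neg (by omega), if_pos (show i + 1 = cpos r b by omega), if_pos g1]
      · by_cases g2 : i = cpos r b
        · rw [if_pos (show i + 1 = cpos r a by omega), if_neg g1, if_pos (by omega)]
        · rw [if_neg (by omega), if_neg (by omega), if_neg g1, if_neg (by omega)]
    rw [hmv]
    omega
  · -- Case C : move onto r from position n-1
    have hbr : b = r := (cpos_zero_iff r b).mp hc2
    have hra : r ≠ a := fun h => by
      have := (cpos_zero_iff r a).mpr h.symm; omega
    have hmv : applyMove D (a,b) r = D r + 1 := by
      unfold applyMove; rw [if_neg hra, if_pos hbr.symm]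
    have hcw : Rfun (cex (applyMove D (a,b)) r) n 0 ≤ Rfun (cex D r) n 0 := by
      apply Rfun_mono
      intro i h0i hiM
      rw [he' i hiM]
      by_cases g1 : i = cpos r a
      · rw [if_pos g1]; omega
      · rw [if_neg g1, if_neg (by omega)]
    have hccw : Lfun (fun i => cex (applyMove D (a,b)) r (i+1)) (n-1) + 1
        = Lfun (fun i => cex D r (i+1)) (n-1) := by
      apply L_drop_near (by omega)
        (by show 2 ≤ cex D r (n - 1 - 1 + 1)
            rw [show n - 1 - 1 + 1 = cpos r a by omega, hea]; exact h2)
      intro i hi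
      show cex (applyMove D (a,b)) r (i+1) = _
      rw [he' (i+1) (by omega)]
      by_cases g1 : i = n - 1 - 1
      · rw [if_pos (show i + 1 = cpos r a by omega), if_pos g1]
      · rw [if_neg (by omega), if_neg (by omega), if_neg g1]
    rw [hmv]
    omega
  · -- Case D : move onto r from position 1
    have hbr : b = r := (cpos_zero_iff r b).mp hc2
    have hra : r ≠ a := fun h => by
      have := (cpos_zero_iff r a).mpr h.symm; omega
    have hmv : applyMove D (a,b) r = D r + 1 := by
      unfold applyMove; rw [if_neg hra, if_pos hbr.symm]
    have hcw : Rfun (cex (applyMove D (a,b)) r) n 0 + 1 = Rfun (cex D r) n 0 := by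
      apply R_drop_first (by omega)
        (by rw [show (1:ℕ) = cpos r a from hc1.symm, hea]; exact h2)
      intro i h1i hiM
      rw [he' i hiM]
      by_cases g1 : i = 1
      · rw [if_pos (by omega), if_pos g1]
      · rw [if_neg (by omega), if_neg (by omega), if_neg g1]
    have hccw : Lfun (fun i => cex (applyMove D (a,b)) r (i+1)) (n-1)
        ≤ Lfun (fun i => cex D r (i+1)) (n-1) := by
      apply Lfun_mono
      intro i hi
      show cex (applyMove D (a,b)) r (i+1) ≤ cex D r (i+1)
      rw [he' (i+1) (by omega)]
      by_cases g1 : i + 1 = cpos r a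
      · rw [if_pos g1]; omega
      · rw [if_neg g1, if_neg (by omega)]
    rw [hmv]
    omega
  · -- Case E : move off r to position 1
    have har : a = r := (cpos_zero_iff r a).mp hc1
    have h2r : 2 ≤ D r := har ▸ h2
    have hmv : applyMove D (a,b) r = D r - 2 := by
      unfold applyMove; rw [if_pos har.symm]
    have hcw : Rfun (cex (applyMove D (a,b)) r) n 0 ≤ Rfun (cex D r) n 0 + 1 := by
      apply R_bump (j := 1)
      intro i h1i hiM
      rw [he' i hiM]
      by_cases g1 : i = 1
      · rw [if_neg (by omega), if_pos (by omega), if_pos g1]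
      · rw [if_neg (by omega), if_neg (by omega), if_neg g1]
    have hccw : Lfun (fun i => cex (applyMove D (a,b)) r (i+1)) (n-1)
        ≤ Lfun (fun i => cex D r (i+1)) (n-1) + 1 := by
      apply L_bump (j := 0)
      intro i hi
      show cex (applyMove D (a,b)) r (i+1) = _
      rw [he' (i+1) (by omega)]
      by_cases g1 : i = 0
      · rw [if_neg (by omega), if_pos (by omega), if_pos g1]
      · rw [if_neg (by omega), if_neg (by omega), if_neg g1]
    rw [hmv]
    omega
  · -- Case F : move off r to position n-1
    have har : a = r := (cpos_zero_iff r a).mp hc1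
    have h2r : 2 ≤ D r := har ▸ h2
    have hmv : applyMove D (a,b) r = D r - 2 := by
      unfold applyMove; rw [if_pos har.symm]
    have hcw : Rfun (cex (applyMove D (a,b)) r) n 0 ≤ Rfun (cex D r) n 0 + 1 := by
      apply R_bump (j := n - 1)
      intro i h1i hiM
      rw [he' i hiM]
      by_cases g1 : i = n - 1
      · rw [if_neg (by omega), if_pos (by omega), if_pos g1]
      · rw [if_neg (by omega), if_neg (by omega), if_neg g1]
    have hccw : Lfun (fun i => cex (applyMove D (a,b)) r (i+1)) (n-1)
        ≤ Lfun (fun i => cex D r (i+1)) (n-1) + 1 := by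
      apply L_bump (j := n - 1 - 1)
      intro i hi
      show cex (applyMove D (a,b)) r (i+1) = _
      rw [he' (i+1) (by omega)]
      by_cases g1 : i = n - 1 - 1
      · rw [if_neg (by omega), if_pos (by omega), if_pos g1]
      · rw [if_neg (by omega), if_neg (by omega), if_neg g1]
    rw [hmv]
    omega

lemma validSeq_mono {V : Type*} [DecidableEq V] {G H : SimpleGraph V} (hGH : G ≤ H) :
    ∀ (l : List (V × V)) (D : V → ℕ), ValidSeq G D l → ValidSeq H D l := by
  intro l
  induction l with
  | nil => intro D _; trivial
  | cons e l ih => exact fun D h => ⟨hGH h.1, h.2.1, ih _ h.2.2⟩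

lemma applySeq_le_Phi {n : ℕ} (hn : 3 ≤ n) (r : Fin n) :
    ∀ (l : List (Fin n × Fin n)) (D : Fin n → ℕ),
      ValidSeq (cycleGraph n) D l → applySeq D l r ≤ Phi D r := by
  intro l
  induction l with
  | nil =>
    intro D _
    show D r ≤ Phi D r
    unfold Phi
    omega
  | cons e l ih =>
    intro D h
    obtain ⟨hadj, h2, hval⟩ := h
    have h1 : applySeq D (e :: l) r = applySeq (applyMove D e) l r := rfl
    rw [h1]
    refine le_trans (ih _ hval) ?_
    have := Phi_mono hn D r e.1 e.2 hadj h2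
    rwa [Prod.mk.eta] at this

lemma solvable_cycle_cert {n : ℕ} (hn : 3 ≤ n) (D : Fin n → ℕ)
    (hs : Solvable (cycleGraph n) D) (r : Fin n) :
    1 ≤ D r ∨ 1 ≤ Rfun (cex D r) n 0 ∨ 1 ≤ Lfun (fun i => cex D r (i+1)) (n-1) := by
  obtain ⟨l, hval, hge⟩ := hs r
  have := applySeq_le_Phi hn r l D hval
  unfold Phi at this
  omega

theorem cert_lower {n : ℕ} (hn : 3 ≤ n) (D : Fin n → ℕ)
    (hcov : ∀ r : Fin n, 1 ≤ D r ∨ 1 ≤ Rfun (cex D r) n 0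
      ∨ 1 ≤ Lfun (fun i => cex D r (i+1)) (n-1)) :
    2 * n ≤ 3 * ∑ v, D v := by
  set k := ∑ v, D v with hk
  set N := 4 * n + 1 with hN
  set E : ℕ → ℕ := fun i => D ⟨i % n, Nat.mod_lt _ (by omega)⟩ with hE
  have hsum1 : ∑ i ∈ Finset.range n, E i = k := by
    rw [← Fin.sum_univ_eq_sum_range E n, hk]
    refine Finset.sum_congr rfl (fun v _ => ?_)
    show D ⟨v.val % n, _⟩ = D v
    congr 1
    exact Fin.ext (Nat.mod_eq_of_lt v.isLt)
  have hblock : ∀ c : ℕ, ∑ i ∈ Finset.range (c * n), E i = c * k := by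
    intro c
    induction c with
    | zero => simp
    | succ c ih =>
      have hcc : (c+1) * n = c*n + n := by ring
      rw [hcc, Finset.range_eq_Ico,
        ← Finset.sum_Ico_consecutive _ (Nat.zero_le (c*n)) (by omega : c*n ≤ c*n + n),
        ← Finset.range_eq_Ico, Finset.sum_Ico_eq_sum_range]
      have h1 : ∑ i ∈ Finset.range (c*n + n - c*n), E (c*n + i) = k := by
        rw [show c*n + n - c*n = n by omega]
        rw [← hsum1]
        refine Finset.sum_congr rfl (fun i _ => ?_)
        show D ⟨(c*n + i) % n, _⟩ = D ⟨i % n, _⟩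
        congr 1
        apply Fin.ext
        show (c*n + i) % n = i % n
        rw [Nat.mul_comm c n]
        exact Nat.mul_add_mod n c i
      rw [ih, h1]
      ring
  have hmid : Finset.Ico n ((N-1) * n) ⊆ coveredSet E (N * n) := by
    intro p hp
    rw [Finset.mem_Ico] at hp
    obtain ⟨hp1, hp2⟩ := hp
    have hsplit : N * n = (N-1)*n + n := by
      have h : N = (N-1)+1 := by omega
      calc N * n = ((N-1)+1) * n := by rw [← h]
        _ = (N-1)*n + n := by ring
    have hpM : p < N * n := by omega
    set r : Fin n := ⟨p % n, Nat.mod_lt _ (by omega)⟩ with hr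
    have hmatch : ∀ i, E (p + i) = cex D r i := by
      intro i
      show D ⟨(p+i) % n, _⟩ = D ⟨(p % n + i) % n, _⟩
      congr 1
      exact Fin.ext (Nat.mod_add_mod p n i).symm
    rw [mem_coveredSet]
    refine ⟨hpM, ?_⟩
    rcases hcov r with hc | hc | hc
    · left
      have hEp : E p = D r := rfl
      omega
    · right; right
      have e1 : Rfun (fun i => E (p + i)) n 0 = Rfun (cex D r) n 0 := by
        rw [funext hmatch]
      have e2 : Rfun (fun i => E (p+i)) n 0 = Rfun E (p + n) p := Rfun_translate E p n
      have e3 : Rfun E (p + n) p ≤ Rfun E (N*n) p := Rfun_extend E p (by omega)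
      omega
    · right; left
      have e1 : Lfun (fun i => cex D r (i+1)) (n-1) = Lfun (fun i => E (p - (n-1) + i)) (n-1) := by
        refine Lfun_congr (fun i hi => ?_)
        show D ⟨(p % n + (i+1)) % n, _⟩ = D ⟨(p - (n-1) + i) % n, _⟩
        congr 1
        apply Fin.ext
        show (p % n + (i+1)) % n = (p - (n-1) + i) % n
        have hx : (p - (n-1) + i) + n = p + (i+1) := by omega
        calc (p % n + (i+1)) % n = (p + (i+1)) % n := Nat.mod_add_mod p n (i+1)
          _ = ((p - (n-1) + i) + n) % n := by rw [hx]
          _ = (p - (n-1) + i) % n := Nat.add_mod_right _ n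
      have e2 : Lfun (fun i => E (p - (n-1) + i)) (n-1) ≤ Lfun E (p - (n-1) + (n-1)) :=
        Lfun_shift_ge E _ _
      rw [show p - (n-1) + (n-1) = p by omega] at e2
      omega
  have hcount : (N - 2) * n ≤ (coveredSet E (N*n)).card := by
    have h1 : (Finset.Ico n ((N-1)*n)).card = (N-1)*n - n := Nat.card_Ico n ((N-1)*n)
    have h2 := Finset.card_le_card hmid
    have h3 : (N-1)*n = (N-2)*n + n := by
      calc (N-1)*n = ((N-2) + 1) * n := by rw [show (N-2)+1 = N-1 by omega]
        _ = (N-2)*n + n := by ring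
    omega
  have hcb := cover_bound (N * k) E (N * n) (le_of_eq (hblock N))
  rw [hblock N] at hcb
  by_contra hcon
  push_neg at hcon
  have hmain : 2 * ((N-2) * n) ≤ 3 * (N * k) := by omega
  have hNsub : N - 2 = 4*n - 1 := by omega
  rw [hNsub, hN] at hmain
  obtain ⟨m, rfl⟩ : ∃ m, n = m + 3 := ⟨n - 3, by omega⟩
  rw [show 4*(m+3) - 1 = 4*m + 11 by omega] at hmain
  nlinarith [hmain, hcon]

theorem cycle_lower_bound {n : ℕ} (hn : 3 ≤ n) (D : Fin n → ℕ)
    (hs : Solvable (cycleGraph n) D) : 2 * n ≤ 3 * ∑ v, D v :=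
  cert_lower hn D (fun r => solvable_cycle_cert hn D hs r)

theorem path_solvable_cycle {n : ℕ} (D : Fin n → ℕ)
    (hs : Solvable (pathGraph n) D) : Solvable (cycleGraph n) D := by
  intro r
  obtain ⟨l, hval, hge⟩ := hs r
  exact ⟨l, validSeq_mono pathGraph_le_cycleGraph l D hval, hge⟩

/-! Upper bound: an explicit solvable distribution. -/

lemma div_le_helper {n s : ℕ} (h : 2*n ≤ 3*s) : (2*n+2)/3 ≤ s := by omega

def fOpt (n : ℕ) : ℕ → ℕ :=
  fun i => if i % 3 = 1 then 2 else if n % 3 = 1 ∧ i = n - 1 then 1 else 0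

def Dopt (n : ℕ) : Fin n → ℕ := fun v => fOpt n v.val

lemma fOpt_sum (n : ℕ) : ∀ m, ∑ i ∈ Finset.range m, fOpt n i
    = 2 * ((m+1)/3) + (if n % 3 = 1 ∧ n - 1 < m then 1 else 0) := by
  intro m
  induction m with
  | zero => simp
  | succ m ih =>
    rw [Finset.sum_range_succ, ih]
    unfold fOpt
    split_ifs <;> omega

lemma Dopt_sum {n : ℕ} (hn : 3 ≤ n) : (∑ v, Dopt n v) = (2*n+2)/3 := by
  have h1 : (∑ v, Dopt n v) = ∑ i ∈ Finset.range n, fOpt n i :=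
    Fin.sum_univ_eq_sum_range (fOpt n) n
  rw [h1, fOpt_sum n n]
  split_ifs <;> omega

lemma Dopt_solv_path {n : ℕ} (hn : 3 ≤ n) : Solvable (pathGraph n) (Dopt n) := by
  intro r
  by_cases h1 : 1 ≤ Dopt n r
  · exact ⟨[], trivial, h1⟩
  · have hrl := r.isLt
    have hval : fOpt n r.val = 0 := by
      unfold Dopt at h1; omega
    have hcond : ¬ (r.val % 3 = 1) ∧ ¬ (n % 3 = 1 ∧ r.val = n - 1) := by
      by_contra hcon
      unfold fOpt at hval
      rcases Decidable.not_and_iff_or_not.mp hcon with h | h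
      · rw [not_not] at h; rw [if_pos h] at hval; omega
      · rw [not_not] at h
        rw [if_neg (by omega), if_pos h] at hval
        omega
    obtain ⟨hm1, hm2⟩ := hcond
    -- choose the neighbouring big pile
    obtain ⟨c, hadj, hc2⟩ : ∃ c : Fin n, (pathGraph n).Adj c r ∧ 2 ≤ Dopt n c := by
      rcases (by omega : r.val % 3 = 0 ∨ r.val % 3 = 2) with h3 | h3
      · -- use r+1 ; r.val + 1 < n since otherwise n % 3 = 1 and r = n-1
        have hlt : r.val + 1 < n := by
          by_contra hge
          have : r.val = n - 1 := by omega
          have : n % 3 = 1 := by omega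
          exact hm2 ⟨this, by omega⟩
        refine ⟨⟨r.val + 1, hlt⟩, pathGraph_adj.mpr (Or.inr rfl), ?_⟩
        show 2 ≤ fOpt n (r.val + 1)
        unfold fOpt
        rw [if_pos (by omega)]
      · refine ⟨⟨r.val - 1, by omega⟩, pathGraph_adj.mpr (Or.inl (by show r.val - 1 + 1 = r.val; omega)), ?_⟩
        show 2 ≤ fOpt n (r.val - 1)
        unfold fOpt
        rw [if_pos (by omega)]
    refine ⟨[(c, r)], ⟨hadj, hc2, trivial⟩, ?_⟩
    have hne : r ≠ c := (hadj.ne).symm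
    show 1 ≤ applyMove (Dopt n) (c, r) r
    unfold applyMove
    rw [if_neg hne, if_pos rfl]
    omega

theorem opt_pebbling_path_cycle (n : ℕ) (hn : 3 ≤ n) :
    optPebNum (SimpleGraph.pathGraph n) = (2 * n + 2) / 3 ∧
    optPebNum (SimpleGraph.cycleGraph n) = (2 * n + 2) / 3 := by
  have hsolvp := Dopt_solv_path hn
  have hsolvc := path_solvable_cycle (Dopt n) hsolvp
  have hsum := Dopt_sum hn
  have hmemp : (2*n+2)/3 ∈ {k : ℕ | ∃ D : Fin n → ℕ, (∑ v, D v) = k ∧ Solvable (pathGraph n) D} :=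
    ⟨Dopt n, hsum, hsolvp⟩
  have hmemc : (2*n+2)/3 ∈ {k : ℕ | ∃ D : Fin n → ℕ, (∑ v, D v) = k ∧ Solvable (cycleGraph n) D} :=
    ⟨Dopt n, hsum, hsolvc⟩
  constructor
  · apply le_antisymm
    · exact Nat.sInf_le hmemp
    · obtain ⟨D, hD1, hD2⟩ := Nat.sInf_mem (⟨_, hmemp⟩ : Set.Nonempty _)
      have hlow := cycle_lower_bound hn D (path_solvable_cycle D hD2)
      rw [hD1] at hlow
      have heq : optPebNum (pathGraph n)
          = sInf {k : ℕ | ∃ D : Fin n → ℕ, (∑ v, D v) = k ∧ Solvable (pathGraph n) D} := rfl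
      exact le_of_le_of_eq (div_le_helper hlow) heq.symm
  · apply le_antisymm
    · exact Nat.sInf_le hmemc
    · obtain ⟨D, hD1, hD2⟩ := Nat.sInf_mem (⟨_, hmemc⟩ : Set.Nonempty _)
      have hlow := cycle_lower_bound hn D hD2
      rw [hD1] at hlow
      have heq : optPebNum (cycleGraph n)
          = sInf {k : ℕ | ∃ D : Fin n → ℕ, (∑ v, D v) = k ∧ Solvable (cycleGraph n) D} := rfl
      exact le_of_le_of_eq (div_le_helper hlow) heq.symm
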